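/- In the biased assimilation model on a strongly connected graph with $b_i > 0$ and each agent having at least one neighbor, the Jacobian of the update map at the fixed point $x = \mathbf{0}$ is the diagonal matrix with entries $w_{ii}/(w_{ii} + d_i)$, and its spectral radius is strictly less than 1. Hence $\mathbf{0}$ is a locally exponentially stable fixed point. -/

import Mathlib

open Finset Filter Topology

/-- Weighted sum of neighbors' opinions: `s_i = ∑_{j ∈ N_i} w_{ij} x_j`. -/
noncomputable def wsum {N : ℕ} (w : Fin N → Fin N → ℝ) (Nbr : Fin N → Finset (Fin N))
    (x : Fin N → ℝ) (i : Fin N) : ℝ :=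
  ∑ j ∈ Nbr i, w i j * x j

/-- Weighted degree `d_i = ∑_{j ∈ N_i} w_{ij}`. -/
noncomputable def degw {N : ℕ} (w : Fin N → Fin N → ℝ) (Nbr : Fin N → Finset (Fin N))
    (i : Fin N) : ℝ :=
  ∑ j ∈ Nbr i, w i j

/-- Biased assimilation update map (componentwise). Powers are real powers. -/
noncomputable def F {N : ℕ} (w : Fin N → Fin N → ℝ) (Nbr : Fin N → Finset (Fin N))
    (b : Fin N → ℝ) (x : Fin N → ℝ) (i : Fin N) : ℝ :=
  (w i i * x i + x i ^ b i * wsum w Nbr x i) /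
    (w i i + x i ^ b i * wsum w Nbr x i + (1 - x i) ^ b i * (degw w Nbr i - wsum w Nbr x i))

/-- The directed influence graph (edge `j → i` iff `j ∈ Nbr i`) is strongly connected. -/
def StronglyConnected {N : ℕ} (Nbr : Fin N → Finset (Fin N)) : Prop :=
  ∀ i j : Fin N, Relation.TransGen (fun a c => a ∈ Nbr c) i j

/-- Lyapunov stability of a fixed point of the discrete-time system `x⁺ = G x`. -/
def LyapStable {E : Type*} [NormedAddCommGroup E] (G : E → E) (q : E) : Prop :=
  ∀ ε > 0, ∃ δ > 0, ∀ x, ‖x - q‖ < δ → ∀ k : ℕ, ‖G^[k] x - q‖ < ε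

/-- Local exponential stability of a fixed point of `x⁺ = G x`. -/
def LocExpStable {E : Type*} [NormedAddCommGroup E] (G : E → E) (q : E) : Prop :=
  ∃ δ > 0, ∃ C > 0, ∃ r, 0 ≤ r ∧ r < 1 ∧
    ∀ x, ‖x - q‖ ≤ δ → ∀ k : ℕ, ‖G^[k] x - q‖ ≤ C * r ^ k * ‖x - q‖

/-- Spectral radius of a real square matrix: supremum of moduli of its complex eigenvalues. -/
noncomputable def specRad {n : ℕ} (M : Matrix (Fin n) (Fin n) ℝ) : ℝ :=
  sSup {r : ℝ | ∃ μ : ℂ, (M.map (fun a => (a : ℂ))).charpoly.IsRoot μ ∧ r = ‖μ‖}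


lemma exists_delta (W D bb : ℝ) (hW : 0 ≤ W) (hD : 0 < D) (hb : 0 < bb) :
    ∃ δ r : ℝ, 0 < δ ∧ δ ≤ 1/2 ∧ 0 < r ∧ r < 1 ∧
      W + δ ^ bb * D ≤ r * (W + D * ((1-δ) ^ (1+bb) - δ ^ (1+bb))) := by
  set r := (W + D/2)/(W+D) with hrdef
  have hWD : 0 < W + D := by linarith
  have hr0 : 0 < r := div_pos (by linarith) hWD
  have hr1 : r < 1 := (div_lt_one hWD).mpr (by linarith)
  set φ : ℝ → ℝ := fun δ => r * (W + D * ((1-δ) ^ (1+bb) - δ ^ (1+bb))) - (W + δ ^ bb * D)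
    with hφ
  have hc : ContinuousAt φ 0 := by
    have h1 : ContinuousAt (fun δ : ℝ => δ ^ (1+bb)) 0 :=
      Real.continuousAt_rpow_const 0 (1+bb) (Or.inr (by linarith))
    have h2 : ContinuousAt (fun δ : ℝ => δ ^ bb) 0 :=
      Real.continuousAt_rpow_const 0 bb (Or.inr hb.le)
    have h3 : ContinuousAt (fun δ : ℝ => (1-δ) ^ (1+bb)) 0 := by
      have hin : ContinuousAt (fun δ : ℝ => 1 - δ) 0 := by fun_prop
      have := (Real.continuousAt_rpow_const ((fun δ : ℝ => 1 - δ) 0) (1+bb)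
        (Or.inl (by norm_num))).comp hin
      exact this
    fun_prop
  have hφ0 : 0 < φ 0 := by
    have hrr : r * (W + D) = W + D/2 := by
      rw [hrdef]; field_simp
    simp only [hφ, Real.one_rpow, Real.zero_rpow (by positivity : (1:ℝ)+bb ≠ 0),
      Real.zero_rpow hb.ne', sub_zero, zero_mul, add_zero, mul_one]
    linarith
  have hev : ∀ᶠ δ in 𝓝 (0:ℝ), 0 < φ δ := hc.eventually (eventually_gt_nhds hφ0)
  rw [Metric.eventually_nhds_iff] at hev
  obtain ⟨ε, hε, hball⟩ := hev
  refine ⟨min (ε/2) (1/2), r, by positivity, min_le_right _ _, hr0, hr1, ?_⟩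
  have : 0 < φ (min (ε/2) (1/2)) := by
    apply hball
    rw [Real.dist_eq, sub_zero, abs_of_pos (by positivity)]
    calc min (ε/2) (1/2) ≤ ε/2 := min_le_left _ _
      _ < ε := by linarith
  simp only [hφ] at this
  linarith

lemma wsum_abs_le {N : ℕ} (w : Fin N → Fin N → ℝ) (Nbr : Fin N → Finset (Fin N))
    (hw : ∀ i, ∀ j ∈ Nbr i, 0 < w i j) (x : Fin N → ℝ) (i : Fin N) :
    |wsum w Nbr x i| ≤ degw w Nbr i * ‖x‖ := by
  calc |wsum w Nbr x i| ≤ ∑ j ∈ Nbr i, |w i j * x j| := Finset.abs_sum_le_sum_abs _ _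
    _ ≤ ∑ j ∈ Nbr i, w i j * ‖x‖ := by
        refine Finset.sum_le_sum fun j hj => ?_
        rw [abs_mul, abs_of_pos (hw i j hj)]
        exact mul_le_mul_of_nonneg_left (by simpa using norm_le_pi_norm x j) (hw i j hj).le
    _ = degw w Nbr i * ‖x‖ := by rw [degw, Finset.sum_mul]

lemma F_contract {N : ℕ} (w : Fin N → Fin N → ℝ) (Nbr : Fin N → Finset (Fin N)) (b : Fin N → ℝ)
    (hw : ∀ i, ∀ j ∈ Nbr i, 0 < w i j) (hwii : ∀ i, 0 ≤ w i i)
    (hd : ∀ i, 0 < degw w Nbr i) (hb : ∀ i, 0 < b i) :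
    ∃ δ, 0 < δ ∧ ∃ r, 0 < r ∧ r < 1 ∧
      ∀ x : Fin N → ℝ, ‖x‖ ≤ δ → ‖F w Nbr b x‖ ≤ r * ‖x‖ := by
  rcases Nat.eq_zero_or_pos N with hN | hN
  · subst hN
    refine ⟨1, one_pos, 1/2, by norm_num, by norm_num, fun x hx => ?_⟩
    have : F w Nbr b x = 0 := funext fun i => i.elim0
    rw [this, norm_zero]
    positivity
  haveI : Nonempty (Fin N) := Fin.pos_iff_nonempty.mp hN
  have h := fun i => exists_delta (w i i) (degw w Nbr i) (b i) (hwii i) (hd i) (hb i)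
  choose δf rf hδ0 hδhalf hr0 hr1 hkey using h
  set δ := Finset.univ.inf' Finset.univ_nonempty δf with hδdef
  set r := Finset.univ.sup' Finset.univ_nonempty rf with hrdef
  have hδpos : 0 < δ := (Finset.lt_inf'_iff _).mpr fun i _ => hδ0 i
  have hrlt1 : r < 1 := (Finset.sup'_lt_iff _).mpr fun i _ => hr1 i
  have hrpos : 0 < r := by
    obtain ⟨i0⟩ := (inferInstance : Nonempty (Fin N))
    exact lt_of_lt_of_le (hr0 i0) (Finset.le_sup' rf (Finset.mem_univ i0))
  refine ⟨δ, hδpos, r, hrpos, hrlt1, fun x hx => ?_⟩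
  rw [pi_norm_le_iff_of_nonneg (by positivity)]
  intro i
  set W := w i i
  set D := degw w Nbr i with hDdef
  set bi := b i
  set δi := δf i with hδi
  set s := wsum w Nbr x i with hsdef
  have hxδi : ‖x‖ ≤ δi := hx.trans (Finset.inf'_le _ (Finset.mem_univ i))
  have hδi0 : 0 < δi := hδ0 i
  have hxi : |x i| ≤ δi := le_trans (by simpa using norm_le_pi_norm x i) hxδi
  have hsabs : |s| ≤ D * ‖x‖ := wsum_abs_le w Nbr hw x i
  have hsδ : |s| ≤ D * δi := hsabs.trans (mul_le_mul_of_nonneg_left hxδi (hd i).le)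
  have hxb : |x i ^ bi| ≤ δi ^ bi :=
    (Real.abs_rpow_le_abs_rpow _ _).trans
      (Real.rpow_le_rpow (abs_nonneg _) hxi (hb i).le)
  have hδb_pos : 0 < δi ^ bi := Real.rpow_pos_of_pos hδi0 _
  -- numerator bound
  have hnum : |W * x i + x i ^ bi * s| ≤ (W + δi ^ bi * D) * ‖x‖ := by
    have h1 : |W * x i| ≤ W * ‖x‖ := by
      rw [abs_mul, abs_of_nonneg (hwii i)]
      exact mul_le_mul_of_nonneg_left (by simpa using norm_le_pi_norm x i) (hwii i)
    have h2 : |x i ^ bi * s| ≤ δi ^ bi * (D * ‖x‖) := by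
      rw [abs_mul]
      exact mul_le_mul hxb hsabs (abs_nonneg _) hδb_pos.le
    calc |W * x i + x i ^ bi * s| ≤ |W * x i| + |x i ^ bi * s| := abs_add_le _ _
      _ ≤ W * ‖x‖ + δi ^ bi * (D * ‖x‖) := add_le_add h1 h2
      _ = (W + δi ^ bi * D) * ‖x‖ := by ring
  -- denominator lower bound
  have hpow_split : δi ^ (1+bi) = δi * δi ^ bi := by
    rw [Real.rpow_add hδi0, Real.rpow_one]
  have h1δ : (0:ℝ) < 1 - δi := by
    have := hδhalf i; linarith
  have hpow_split' : (1-δi) ^ (1+bi) = (1-δi) * (1-δi) ^ bi := by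
    rw [Real.rpow_add h1δ, Real.rpow_one]
  have ht1 : -(δi ^ (1+bi) * D) ≤ x i ^ bi * s := by
    have : |x i ^ bi * s| ≤ δi ^ (1+bi) * D := by
      rw [abs_mul, hpow_split]
      calc |x i ^ bi| * |s| ≤ δi ^ bi * (D * δi) :=
            mul_le_mul hxb hsδ (abs_nonneg _) hδb_pos.le
        _ = δi * δi ^ bi * D := by ring
    linarith [neg_abs_le (x i ^ bi * s)]
  have ht2 : (1-δi) ^ (1+bi) * D ≤ (1 - x i) ^ bi * (D - s) := by
    have hxi' : x i ≤ δi := (le_abs_self _).trans hxi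
    have ha : (1-δi) ^ bi ≤ (1 - x i) ^ bi :=
      Real.rpow_le_rpow h1δ.le (by linarith) (hb i).le
    have hc : D * (1-δi) ≤ D - s := by
      have : s ≤ D * δi := (le_abs_self s).trans hsδ
      nlinarith
    calc (1-δi) ^ (1+bi) * D = (1-δi) ^ bi * (D * (1-δi)) := by rw [hpow_split']; ring
      _ ≤ (1 - x i) ^ bi * (D - s) :=
        mul_le_mul ha hc (mul_nonneg (hd i).le h1δ.le) (Real.rpow_nonneg (by linarith) _)
  set B := W + D * ((1-δi) ^ (1+bi) - δi ^ (1+bi)) with hBdef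
  have hkeyi := hkey i
  have hBpos : 0 < B := by nlinarith [hr0 i, hwii i, mul_pos hδb_pos (hd i)]
  have hmge : B ≤ W + x i ^ bi * s + (1 - x i) ^ bi * (D - s) := by
    rw [hBdef]; nlinarith
  have hmpos : 0 < W + x i ^ bi * s + (1 - x i) ^ bi * (D - s) := hBpos.trans_le hmge
  show |F w Nbr b x i| ≤ r * ‖x‖
  rw [F, abs_div, abs_of_pos hmpos]
  have hri : rf i ≤ r := Finset.le_sup' rf (Finset.mem_univ i)
  have step : |W * x i + x i ^ bi * s| / (W + x i ^ bi * s + (1 - x i) ^ bi * (D - s))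
      ≤ rf i * ‖x‖ := by
    rw [div_le_iff₀ hmpos]
    calc |W * x i + x i ^ bi * s| ≤ (W + δi ^ bi * D) * ‖x‖ := hnum
      _ ≤ (rf i * B) * ‖x‖ := mul_le_mul_of_nonneg_right hkeyi (norm_nonneg x)
      _ = rf i * B * ‖x‖ := rfl
      _ ≤ rf i * (W + x i ^ bi * s + (1 - x i) ^ bi * (D - s)) * ‖x‖ := by
          have := mul_le_mul_of_nonneg_left hmge (hr0 i).le
          exact mul_le_mul_of_nonneg_right this (norm_nonneg x)
      _ = rf i * ‖x‖ * (W + x i ^ bi * s + (1 - x i) ^ bi * (D - s)) := by ring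
  exact step.trans (mul_le_mul_of_nonneg_right hri (norm_nonneg x))

lemma hasFDerivAt_F {N : ℕ} (w : Fin N → Fin N → ℝ) (Nbr : Fin N → Finset (Fin N))
    (b : Fin N → ℝ) (hw : ∀ i, ∀ j ∈ Nbr i, 0 < w i j) (hwii : ∀ i, 0 ≤ w i i)
    (hd : ∀ i, 0 < degw w Nbr i) (hb : ∀ i, 0 < b i) (i : Fin N) :
    HasFDerivAt (fun y => F w Nbr b y i)
      ((w i i / (w i i + degw w Nbr i)) •
        (ContinuousLinearMap.proj i : (Fin N → ℝ) →L[ℝ] ℝ)) 0 := by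
  have hs0 : wsum w Nbr (0 : Fin N → ℝ) i = 0 := by simp [wsum]
  -- derivative of s
  have hs : HasFDerivAt (fun y : Fin N → ℝ => wsum w Nbr y i)
      (∑ j ∈ Nbr i, w i j • (ContinuousLinearMap.proj j : (Fin N → ℝ) →L[ℝ] ℝ)) 0 := by
    simp only [wsum]
    exact HasFDerivAt.fun_sum fun j _ =>
      ((ContinuousLinearMap.proj j : (Fin N → ℝ) →L[ℝ] ℝ).hasFDerivAt).const_mul (w i j)
  -- the nonlinear term has zero derivative
  have hg : HasFDerivAt (fun y : Fin N → ℝ => y i ^ b i * wsum w Nbr y i)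
      (0 : (Fin N → ℝ) →L[ℝ] ℝ) 0 := by
    rw [hasFDerivAt_iff_isLittleO_nhds_zero]
    simp only [zero_add, sub_zero, ContinuousLinearMap.zero_apply, hs0, mul_zero,
      Real.zero_rpow (hb i).ne', zero_mul]
    have h1 : Filter.Tendsto (fun y : Fin N → ℝ => y i ^ b i) (𝓝 0) (𝓝 0) := by
      have ha : Filter.Tendsto (fun y : Fin N → ℝ => y i) (𝓝 0) (𝓝 0) := by
        simpa using (continuous_apply i).tendsto (0 : Fin N → ℝ)
      have hc : Filter.Tendsto (fun t : ℝ => t ^ b i) (𝓝 0) (𝓝 0) := by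
        have := (Real.continuousAt_rpow_const 0 (b i) (Or.inr (hb i).le)).tendsto
        simpa [Real.zero_rpow (hb i).ne'] using this
      exact hc.comp ha
    have h1' : (fun y : Fin N → ℝ => y i ^ b i) =o[𝓝 0] (fun _ => (1:ℝ)) :=
      (Asymptotics.isLittleO_one_iff ℝ).mpr h1
    have h2 : (fun y : Fin N → ℝ => wsum w Nbr y i) =O[𝓝 0] (fun y : Fin N → ℝ => ‖y‖) := by
      apply Asymptotics.isBigO_of_le' (c := degw w Nbr i)
      intro y
      simpa [Real.norm_eq_abs] using wsum_abs_le w Nbr hw y i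
    have := h1'.mul_isBigO h2
    simp only [one_mul] at this
    exact this.of_norm_right
  -- numerator
  have hnum : HasFDerivAt (fun y : Fin N → ℝ => w i i * y i + y i ^ b i * wsum w Nbr y i)
      (w i i • (ContinuousLinearMap.proj i : (Fin N → ℝ) →L[ℝ] ℝ)) 0 := by
    have hlin : HasFDerivAt (fun y : Fin N → ℝ => w i i * y i)
        (w i i • (ContinuousLinearMap.proj i : (Fin N → ℝ) →L[ℝ] ℝ)) 0 :=
      ((ContinuousLinearMap.proj i : (Fin N → ℝ) →L[ℝ] ℝ).hasFDerivAt).const_mul (w i i)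
    simpa using hlin.fun_add hg
  -- denominator
  set m : (Fin N → ℝ) → ℝ := fun y =>
    w i i + y i ^ b i * wsum w Nbr y i + (1 - y i) ^ b i * (degw w Nbr i - wsum w Nbr y i)
    with hm
  have hden_diff : DifferentiableAt ℝ m 0 := by
    have h3 : DifferentiableAt ℝ (fun y : Fin N → ℝ => (1 - y i) ^ b i) 0 := by
      have hinner : HasFDerivAt (fun y : Fin N → ℝ => 1 - y i)
          (-(ContinuousLinearMap.proj i : (Fin N → ℝ) →L[ℝ] ℝ)) 0 :=
        ((ContinuousLinearMap.proj i : (Fin N → ℝ) →L[ℝ] ℝ).hasFDerivAt).const_sub 1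
      have houter : HasDerivAt (fun t : ℝ => t ^ b i) (b i * 1 ^ (b i - 1))
          ((fun y : Fin N → ℝ => 1 - y i) 0) := by
        simpa using Real.hasDerivAt_rpow_const (x := (1:ℝ)) (p := b i) (Or.inl one_ne_zero)
      exact (houter.comp_hasFDerivAt 0 hinner).differentiableAt
    have h4 : DifferentiableAt ℝ (fun y : Fin N → ℝ => degw w Nbr i - wsum w Nbr y i) 0 :=
      (differentiableAt_const _).sub hs.differentiableAt
    exact ((differentiableAt_const _).add hg.differentiableAt).add (h3.mul h4)
  have hm0 : m 0 = w i i + degw w Nbr i := by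
    simp [hm, hs0, Real.zero_rpow (hb i).ne', Real.one_rpow]
  have hm0pos : 0 < m 0 := by rw [hm0]; linarith [hwii i, hd i]
  have hdinv : HasFDerivAt (fun y => (m y)⁻¹) (fderiv ℝ (fun y => (m y)⁻¹) 0) 0 :=
    (hden_diff.inv hm0pos.ne').hasFDerivAt
  have hdiv := hnum.fun_mul hdinv
  have hF : (fun y : Fin N → ℝ => F w Nbr b y i) =
      fun y => (w i i * y i + y i ^ b i * wsum w Nbr y i) * (m y)⁻¹ := by
    funext y; rw [F, div_eq_mul_inv]
  rw [hF]
  refine HasFDerivAt.congr_fderiv hdiv ?_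
  have hn0 : w i i * (0 : Fin N → ℝ) i + (0 : Fin N → ℝ) i ^ b i * wsum w Nbr 0 i = 0 := by
    simp [hs0]
  rw [hn0, zero_smul, zero_add, hm0, smul_smul]
  congr 1
  field_simp

lemma specRad_diag_lt_one {N : ℕ} (f : Fin N → ℝ) (h0 : ∀ l, 0 ≤ f l) (h1 : ∀ l, f l < 1) :
    specRad (Matrix.diagonal f) < 1 := by
  have hmap : (Matrix.diagonal f).map (fun a => (a : ℂ))
      = Matrix.diagonal (fun l => (f l : ℂ)) := by
    rw [Matrix.diagonal_map (by simp)]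
  have hchar : ((Matrix.diagonal f).map (fun a => (a : ℂ))).charpoly
      = ∏ l : Fin N, (Polynomial.X - Polynomial.C ((f l : ℂ))) := by
    rw [hmap, Matrix.charpoly_of_upperTriangular _ (Matrix.blockTriangular_diagonal _)]
    simp [Matrix.diagonal_apply_eq]
  have hset : {r : ℝ | ∃ μ : ℂ, ((Matrix.diagonal f).map (fun a => (a : ℂ))).charpoly.IsRoot μ
        ∧ r = ‖μ‖}
      = Set.range (fun l : Fin N => ‖((f l : ℂ))‖) := by
    ext r
    simp only [Set.mem_setOf_eq, Set.mem_range, hchar, Polynomial.IsRoot.def,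
      Polynomial.eval_prod, Polynomial.eval_sub, Polynomial.eval_X, Polynomial.eval_C,
      Finset.prod_eq_zero_iff, Finset.mem_univ, true_and, sub_eq_zero]
    constructor
    · rintro ⟨μ, ⟨l, hl⟩, rfl⟩
      exact ⟨l, by rw [hl]⟩
    · rintro ⟨l, hl⟩
      exact ⟨(f l : ℂ), ⟨l, rfl⟩, hl.symm⟩
  rw [specRad, hset]
  rcases Nat.eq_zero_or_pos N with hN | hN
  · subst hN
    rw [Set.range_eq_empty, Real.sSup_empty]
    norm_num
  haveI : Nonempty (Fin N) := Fin.pos_iff_nonempty.mp hN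
  rw [(Set.finite_range _).csSup_lt_iff (Set.range_nonempty _)]
  rintro x ⟨l, rfl⟩
  simpa [Complex.norm_real, Real.norm_eq_abs, abs_of_nonneg (h0 l)] using h1 l

theorem stmt12 {N : ℕ} (w : Fin N → Fin N → ℝ) (Nbr : Fin N → Finset (Fin N)) (b : Fin N → ℝ)
    (hsc : StronglyConnected Nbr) (hne : ∀ i, (Nbr i).Nonempty)
    (hw : ∀ i, ∀ j ∈ Nbr i, 0 < w i j) (hwii : ∀ i, 0 ≤ w i i)
    (hd : ∀ i, 0 < degw w Nbr i) (hb : ∀ i, 0 < b i) :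
    (∀ i j, fderiv ℝ (fun y => F w Nbr b y i) (fun _ => (0 : ℝ)) (Pi.single j 1)
        = Matrix.diagonal (fun l => w l l / (w l l + degw w Nbr l)) i j) ∧
    specRad (Matrix.diagonal (fun l => w l l / (w l l + degw w Nbr l))) < 1 ∧
    LocExpStable (F w Nbr b) (fun _ => 0) := by
  obtain ⟨δ, hδpos, r, hrpos, hrlt1, hcontr⟩ := F_contract w Nbr b hw hwii hd hb
  refine ⟨?_, ?_, ?_⟩
  · intro i j
    have hder := (hasFDerivAt_F w Nbr b hw hwii hd hb i).fderiv
    rw [show (fun _ => (0:ℝ)) = (0 : Fin N → ℝ) from rfl, hder]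
    by_cases h : i = j
    · subst h
      simp [Matrix.diagonal_apply_eq, Pi.single_eq_same]
    · simp [Matrix.diagonal_apply_ne _ h, Pi.single_eq_of_ne h]
  · exact specRad_diag_lt_one _ (fun l => div_nonneg (hwii l) (by linarith [hwii l, hd l]))
      (fun l => (div_lt_one (by linarith [hwii l, hd l])).mpr (by linarith [hd l]))
  · refine ⟨δ, hδpos, 1, one_pos, r, hrpos.le, hrlt1, ?_⟩
    intro x hx k
    have hsub : ∀ y : Fin N → ℝ, y - (fun _ => (0:ℝ)) = y := fun y => by
      funext l; simp
    simp only [hsub] at hx ⊢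
    rw [one_mul]
    have key : ∀ k : ℕ, ‖(F w Nbr b)^[k] x‖ ≤ r ^ k * ‖x‖ ∧ ‖(F w Nbr b)^[k] x‖ ≤ δ := by
      intro k
      induction k with
      | zero =>
        refine ⟨by simp, by simpa using hx⟩
      | succ k ih =>
        obtain ⟨ih1, ih2⟩ := ih
        rw [Function.iterate_succ_apply']
        have hb1 : ‖F w Nbr b ((F w Nbr b)^[k] x)‖ ≤ r * ‖(F w Nbr b)^[k] x‖ :=
          hcontr _ ih2
        constructor
        · calc ‖F w Nbr b ((F w Nbr b)^[k] x)‖ ≤ r * ‖(F w Nbr b)^[k] x‖ := hb1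
            _ ≤ r * (r ^ k * ‖x‖) := mul_le_mul_of_nonneg_left ih1 hrpos.le
            _ = r ^ (k+1) * ‖x‖ := by ring
        · calc ‖F w Nbr b ((F w Nbr b)^[k] x)‖ ≤ r * ‖(F w Nbr b)^[k] x‖ := hb1
            _ ≤ 1 * ‖(F w Nbr b)^[k] x‖ :=
              mul_le_mul_of_nonneg_right hrlt1.le (norm_nonneg _)
            _ = ‖(F w Nbr b)^[k] x‖ := one_mul _
            _ ≤ δ := ih2
    exact (key k).1
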